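/- arXiv:2106.13211 — 2 statements merged into one kernel-verified Lean document; each statement's English description precedes it below -/
import Mathlib

section
/- The map F sending a vector x ∈ ℝ^d with 0 < κ₁ ≤ |x| ≤ κ₂ to the unit vector (1/γ)(x₁,…,x_d, x̃) ∈ ℝ^{d+1}, where x̃ = |x|/(1+|x|) and γ = (|x|² + x̃²)^{1/2}, is injective. -/
lemma key_aux (a b : ℝ) (ha : 0 < a) (hb : 0 < b)
    (h : (a / (1 + a)) / Real.sqrt (a ^ 2 + (a / (1 + a)) ^ 2)
       = (b / (1 + b)) / Real.sqrt (b ^ 2 + (b / (1 + b)) ^ 2)) : a = b := by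
  have ha1 : (0:ℝ) < 1 + a := by linarith
  have hb1 : (0:ℝ) < 1 + b := by linarith
  have hsa : Real.sqrt (a ^ 2 + (a / (1 + a)) ^ 2) ^ 2 = a ^ 2 + (a / (1 + a)) ^ 2 :=
    Real.sq_sqrt (by positivity)
  have hsb : Real.sqrt (b ^ 2 + (b / (1 + b)) ^ 2) ^ 2 = b ^ 2 + (b / (1 + b)) ^ 2 :=
    Real.sq_sqrt (by positivity)
  have h2 : (a / (1 + a)) ^ 2 / (a ^ 2 + (a / (1 + a)) ^ 2)
      = (b / (1 + b)) ^ 2 / (b ^ 2 + (b / (1 + b)) ^ 2) := by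
    rw [← hsa, ← hsb, ← div_pow, ← div_pow, h]
  have hda : (0:ℝ) < a ^ 2 + (a / (1 + a)) ^ 2 := by positivity
  have hdb : (0:ℝ) < b ^ 2 + (b / (1 + b)) ^ 2 := by positivity
  field_simp at h2
  have h3 : a ^ 2 * b ^ 2 * ((1 + b) ^ 2 - (1 + a) ^ 2) = 0 := by linear_combination (a ^ 2 * b ^ 2) * h2
  have hne : a ^ 2 * b ^ 2 ≠ 0 := by positivity
  have h4 : (1 + b) ^ 2 - (1 + a) ^ 2 = 0 := (mul_eq_zero.mp h3).resolve_left hne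
  have h5 : (b - a) * (b + a + 2) = 0 := by linear_combination h4
  rcases mul_eq_zero.mp h5 with h6 | h6
  · linarith
  · linarith

theorem stmt_0 (d : ℕ) (hd : 1 ≤ d) (κ₁ κ₂ : ℝ) (hκ₁ : 0 < κ₁) (hκ : κ₁ ≤ κ₂)
    (F : EuclideanSpace ℝ (Fin d) → EuclideanSpace ℝ (Fin (d + 1)))
    (hF : ∀ x, F x = fun i : Fin (d + 1) =>
      if h : (i : ℕ) < d then
        x ⟨i, h⟩ / Real.sqrt (‖x‖ ^ 2 + (‖x‖ / (1 + ‖x‖)) ^ 2)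
      else (‖x‖ / (1 + ‖x‖)) / Real.sqrt (‖x‖ ^ 2 + (‖x‖ / (1 + ‖x‖)) ^ 2)) :
    Set.InjOn F {x | κ₁ ≤ ‖x‖ ∧ ‖x‖ ≤ κ₂} := by
  intro x hx y hy hFeq
  have hxa : 0 < ‖x‖ := lt_of_lt_of_le hκ₁ hx.1
  have hya : 0 < ‖y‖ := lt_of_lt_of_le hκ₁ hy.1
  replace hFeq := congrArg WithLp.ofLp hFeq
  rw [hF x, hF y] at hFeq
  have hlast := congrFun hFeq ⟨d, Nat.lt_succ_self d⟩
  simp only [dif_neg (lt_irrefl d)] at hlast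
  have hnorm : ‖x‖ = ‖y‖ := key_aux _ _ hxa hya hlast
  have hγ : Real.sqrt (‖x‖ ^ 2 + (‖x‖ / (1 + ‖x‖)) ^ 2) ≠ 0 := by positivity
  ext i
  have hi : (i : ℕ) < d := i.isLt
  have h := congrFun hFeq ⟨i, Nat.lt_succ_of_lt hi⟩
  simp only [dif_pos hi] at h
  rw [← hnorm] at h
  have hxy : x ⟨i, hi⟩ = y ⟨i, hi⟩ := by
    rw [div_eq_div_iff hγ hγ] at h
    exact mul_right_cancel₀ hγ h
  simpa using hxy
end

section
/- Parameter-shift rule: if f(θ) = ⟨ψ| e^{iθP/2} B e^{−iθP/2} |ψ⟩ where P is Hermitian with P² = I and B is Hermitian, then f'(θ) = (f(θ + π/2) − f(θ − π/2))/2. -/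
open Matrix

set_option maxHeartbeats 1000000 in
lemma exp_involution {m : ℕ} (P : Matrix (Fin m) (Fin m) ℂ) (hP2 : P * P = 1) (z : ℂ) :
    NormedSpace.exp (z • P) =
      Complex.cosh z • (1 : Matrix (Fin m) (Fin m) ℂ) + Complex.sinh z • P := by
  rw [NormedSpace.exp_eq_tsum (𝕂 := ℂ)]
  refine HasSum.tsum_eq ?_
  have hpe : ∀ k : ℕ, P ^ (2 * k) = 1 := fun k => by rw [pow_mul, pow_two, hP2, one_pow]
  have keye : ∀ k : ℕ, ((Nat.factorial (2 * k) : ℂ))⁻¹ • (z • P) ^ (2 * k)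
      = (z ^ (2 * k) / (Nat.factorial (2 * k) : ℂ)) • (1 : Matrix (Fin m) (Fin m) ℂ) := by
    intro k
    rw [smul_pow, hpe k, smul_smul, div_eq_inv_mul]
  have keyo : ∀ k : ℕ, ((Nat.factorial (2 * k + 1) : ℂ))⁻¹ • (z • P) ^ (2 * k + 1)
      = (z ^ (2 * k + 1) / (Nat.factorial (2 * k + 1) : ℂ)) • P := by
    intro k
    rw [smul_pow, pow_succ P, hpe k, one_mul, smul_smul, div_eq_inv_mul]
  have he : HasSum (fun k : ℕ => ((Nat.factorial (2 * k) : ℂ))⁻¹ • (z • P) ^ (2 * k))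
      (Complex.cosh z • (1 : Matrix (Fin m) (Fin m) ℂ)) := by
    simp only [keye]
    exact (Complex.hasSum_cosh z).smul_const 1
  have ho : HasSum (fun k : ℕ => ((Nat.factorial (2 * k + 1) : ℂ))⁻¹ • (z • P) ^ (2 * k + 1))
      (Complex.sinh z • P) := by
    simp only [keyo]
    exact (Complex.hasSum_sinh z).smul_const P
  exact he.even_add_odd ho

theorem stmt_18 (m : ℕ) (P B : Matrix (Fin m) (Fin m) ℂ)
    (hP : P.IsHermitian) (hP2 : P * P = 1) (hB : B.IsHermitian)
    (ψ : Fin m → ℂ) (hψ : star ψ ⬝ᵥ ψ = 1)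
    (f : ℝ → ℝ)
    (hf : ∀ θ : ℝ, (f θ : ℂ) = star ψ ⬝ᵥ
      ((NormedSpace.exp (((θ : ℂ) / 2) • (Complex.I • P)) * B *
        NormedSpace.exp ((-(θ : ℂ) / 2) • (Complex.I • P))) *ᵥ ψ))
    (θ : ℝ) :
    HasDerivAt f ((f (θ + Real.pi / 2) - f (θ - Real.pi / 2)) / 2) θ := by
  have hexp : ∀ z : ℂ, NormedSpace.exp (z • (Complex.I • P)) =
      Complex.cosh (z * Complex.I) • (1 : Matrix (Fin m) (Fin m) ℂ)
        + Complex.sinh (z * Complex.I) • P := fun z => by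
    rw [smul_smul]; exact exp_involution P hP2 (z * Complex.I)
  obtain ⟨A, C, D, key⟩ : ∃ A C D : ℂ, ∀ t : ℝ,
      (f t : ℂ) = A + C * (Real.cos t : ℂ) + D * (Real.sin t : ℂ) := by
    refine ⟨(star ψ ⬝ᵥ (B *ᵥ ψ) + star ψ ⬝ᵥ ((P * B * P) *ᵥ ψ)) / 2,
      (star ψ ⬝ᵥ (B *ᵥ ψ) - star ψ ⬝ᵥ ((P * B * P) *ᵥ ψ)) / 2,
      Complex.I * (star ψ ⬝ᵥ ((P * B) *ᵥ ψ) - star ψ ⬝ᵥ ((B * P) *ᵥ ψ)) / 2, fun t => ?_⟩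
    rw [hf t, hexp, hexp]
    simp only [Complex.cosh_mul_I, Complex.sinh_mul_I, neg_div, Complex.cos_neg,
      Complex.sin_neg]
    rw [Complex.ofReal_cos, Complex.ofReal_sin]
    have h2 : 2 * ((t : ℂ) / 2) = (t : ℂ) := by ring
    have hc : Complex.cos (t : ℂ) =
        Complex.cos ((t : ℂ) / 2) ^ 2 - Complex.sin ((t : ℂ) / 2) ^ 2 := by
      have h := Complex.cos_two_mul ((t : ℂ) / 2)
      rw [h2] at h
      linear_combination h + Complex.sin_sq_add_cos_sq ((t : ℂ) / 2)
    have hs : Complex.sin (t : ℂ) =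
        2 * Complex.sin ((t : ℂ) / 2) * Complex.cos ((t : ℂ) / 2) := by
      have h := Complex.sin_two_mul ((t : ℂ) / 2)
      rw [h2] at h
      exact h
    rw [hc, hs]
    have hpy : Complex.sin ((t : ℂ) / 2) ^ 2 + Complex.cos ((t : ℂ) / 2) ^ 2 = 1 :=
      Complex.sin_sq_add_cos_sq _
    simp only [Matrix.add_mul, Matrix.mul_add, Matrix.smul_mul, Matrix.mul_smul,
      Matrix.one_mul, Matrix.mul_one, Matrix.add_mulVec, Matrix.smul_mulVec,
      dotProduct_add, dotProduct_smul, smul_eq_mul, neg_smul, Matrix.neg_mulVec,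
      dotProduct_neg, smul_smul]
    linear_combination ((star ψ ⬝ᵥ (B *ᵥ ψ) + star ψ ⬝ᵥ ((P * B * P) *ᵥ ψ)) / 2) * hpy
      - (Complex.sin ((t : ℂ) / 2) ^ 2 * (star ψ ⬝ᵥ ((P * B * P) *ᵥ ψ))) * Complex.I_sq
  have hfun : ∀ t : ℝ, f t = A.re + C.re * Real.cos t + D.re * Real.sin t := by
    intro t
    have h := congrArg Complex.re (key t)
    simpa [Complex.add_re, Complex.mul_re, Complex.cos_ofReal_re, Complex.sin_ofReal_re] using h
  have hEq : f = fun t => A.re + C.re * Real.cos t + D.re * Real.sin t := funext hfun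
  rw [hEq]
  have hd : HasDerivAt (fun t => A.re + C.re * Real.cos t + D.re * Real.sin t)
      (0 + C.re * -Real.sin θ + D.re * Real.cos θ) θ :=
    ((hasDerivAt_const θ A.re).add ((Real.hasDerivAt_cos θ).const_mul C.re)).add
      ((Real.hasDerivAt_sin θ).const_mul D.re)
  convert hd using 1
  simp only [Real.cos_add, Real.sin_add, Real.cos_sub, Real.sin_sub,
    Real.cos_pi_div_two, Real.sin_pi_div_two]
  ring
end
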